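/- Let m = 3 and k = 3 (so ξ = exp(2πi/8)). There is no symmetric 3×3 integer matrix R such that τ_R^{(3)} equals the Controlled-Controlled-Z gate CCZ = diag(1, 1, 1, 1, 1, 1, 1, −1), the 8×8 diagonal matrix indexed by v ∈ {0,1}^3 whose (v,v) entry is (−1)^{v_1 v_2 v_3}. -/
import Mathlib


open Complex Matrix

namespace CliffordHierarchy

noncomputable section

variable {ι : Type*} [Fintype ι] [DecidableEq ι]

/-- Embed a binary vector (entries in `ZMod 2`) into ℤ as a 0/1 vector. -/
def toZ (v : ι → ZMod 2) : ι → ℤ := fun i => ((v i).val : ℤ)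

/-- Reduce an integer vector mod 2, viewed in `ZMod 2`. -/
def red2 (a : ι → ℤ) : ι → ZMod 2 := fun i => ((a i : ZMod 2))

/-- Dot product of integer row vectors, over ℤ. -/
def dotZ (x y : ι → ℤ) : ℤ := ∑ i, x i * y i

/-- Bilinear form `x R yᵀ` over ℤ. -/
def bil (R : Matrix ι ι ℤ) (x y : ι → ℤ) : ℤ := ∑ i, ∑ j, x i * R i j * y j

/-- η(v; R, w) = [(v + w) − (v ∗ w)] R (v ∗ w)ᵀ, with ∗ the entrywise product. -/
def eta (R : Matrix ι ι ℤ) (v w : ι → ℤ) : ℤ := bil R (v + w - v * w) (v * w)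

/-- bitwise XOR of 0/1 integer vectors, re-embedded as a 0/1 integer vector. -/
def vxor (v w : ι → ℤ) : ι → ℤ := fun i => v i + w i - 2 * (v i * w i)

/-- ξ_k = exp(2πi/2^k). -/
def xi (k : ℕ) : ℂ := Complex.exp (2 * Real.pi * Complex.I / 2 ^ k)

/-- τ_R^{(k)} = diag(ξ^{v R vᵀ mod 2^k}), indexed by v ∈ {0,1}^m. -/
def tau (k : ℕ) (R : Matrix ι ι ℤ) : Matrix (ι → ZMod 2) (ι → ZMod 2) ℂ :=
  Matrix.diagonal fun v => xi k ^ (bil R (toZ v) (toZ v) % 2 ^ k)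

/-- The Hermitian Pauli matrix E(a,b) extended to integer-vector arguments:
    E(a,b) e_v = i^{a·b mod 4} (−1)^{v·b} e_{v ⊕ a₀}. -/
def EMat (a b : ι → ℤ) : Matrix (ι → ZMod 2) (ι → ZMod 2) ℂ :=
  Matrix.of fun u v =>
    if u = v + red2 a then Complex.I ^ (dotZ a b % 4) * (-1 : ℂ) ^ dotZ (toZ v) b else 0

/-- 0th binary digit vector of a (componentwise `mod 2`). -/
def dig0 (a : ι → ℤ) : ι → ℤ := fun i => a i % 2

/-- 1st binary digit vector of a. -/
def dig1 (a : ι → ℤ) : ι → ℤ := fun i => (a i / 2) % 2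

/-- q^{(k−1)}(v; R, a, b). -/
def qfun (k : ℕ) (R : Matrix ι ι ℤ) (a b v : ι → ℤ) : ℤ :=
  (1 - 2 ^ (k - 2)) * bil R (dig0 a) (dig0 a)
    + 2 ^ (k - 1) * (dotZ (dig0 a) (dig1 b) + dotZ (dig0 b) (dig1 a))
    + (2 + 2 ^ (k - 1)) * bil R v (dig0 a) - 4 * eta R v (dig0 a)




lemma xi3_prim : IsPrimitiveRoot (xi 3) 8 := by
  have h := Complex.isPrimitiveRoot_exp 8 (by norm_num)
  have : Complex.exp (2 * Real.pi * Complex.I / (8:ℕ)) = xi 3 := by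
    unfold xi; norm_num
  rwa [this] at h

lemma xi3_ne : (xi 3) ≠ 0 := xi3_prim.ne_zero (by norm_num)

lemma dvd_of_pow_one {a : ℤ} (h : xi 3 ^ (a % 8) = 1) : (8:ℤ) ∣ a := by
  have := (xi3_prim.zpow_eq_one_iff_dvd (a % 8)).1 h
  omega

lemma xi3_four : xi 3 ^ (4:ℤ) = -1 := by
  have h8 : xi 3 ^ (8:ℕ) = 1 := xi3_prim.pow_eq_one
  have h4 : xi 3 ^ (4:ℕ) ≠ 1 := by
    intro h
    have := (xi3_prim.pow_eq_one_iff_dvd 4).1 h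
    omega
  have hsq : (xi 3 ^ (4:ℕ)) ^ 2 = 1 := by rw [← pow_mul]; exact h8
  rcases sq_eq_one_iff.1 hsq with h | h
  · exact absurd h h4
  · rw [show (4:ℤ) = (4:ℕ) by norm_num, zpow_natCast]; exact h

lemma dvd_of_pow_neg_one {a : ℤ} (h : xi 3 ^ (a % 8) = -1) : (8:ℤ) ∣ (a + 4) := by
  have h1 : xi 3 ^ (a % 8 + 4) = 1 := by
    rw [zpow_add₀ xi3_ne, h, xi3_four]; ring
  have h2 : (8:ℤ) ∣ (a % 8 + 4) := (xi3_prim.zpow_eq_one_iff_dvd _).1 h1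
  omega

theorem stmt10 :
    ¬ ∃ R : Matrix (Fin 3) (Fin 3) ℤ, R.IsSymm ∧
        tau 3 R
          = Matrix.diagonal (fun v : Fin 3 → ZMod 2 =>
              (-1 : ℂ) ^ (toZ v 0 * toZ v 1 * toZ v 2)) := by
  rintro ⟨R, -, heq⟩
  have key : ∀ v : Fin 3 → ZMod 2,
      xi 3 ^ (bil R (toZ v) (toZ v) % 2 ^ 3)
        = (-1 : ℂ) ^ (toZ v 0 * toZ v 1 * toZ v 2) := by
    intro v
    have h := congr_fun (congr_fun heq v) v
    simpa [tau, Matrix.diagonal_apply_eq] using h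
  have expand : ∀ v : Fin 3 → ZMod 2, bil R (toZ v) (toZ v) =
      toZ v 0 * R 0 0 * toZ v 0 + toZ v 0 * R 0 1 * toZ v 1 + toZ v 0 * R 0 2 * toZ v 2
    + toZ v 1 * R 1 0 * toZ v 0 + toZ v 1 * R 1 1 * toZ v 1 + toZ v 1 * R 1 2 * toZ v 2
    + toZ v 2 * R 2 0 * toZ v 0 + toZ v 2 * R 2 1 * toZ v 1 + toZ v 2 * R 2 2 * toZ v 2 := by
    intro v
    simp [bil, Fin.sum_univ_three]
    ring
  have hv0 := key ![1,0,0]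
  have hv1 := key ![0,1,0]
  have hv2 := key ![0,0,1]
  have hv01 := key ![1,1,0]
  have hv02 := key ![1,0,1]
  have hv12 := key ![0,1,1]
  have hv3 := key ![1,1,1]
  rw [expand] at hv0 hv1 hv2 hv01 hv02 hv12 hv3
  simp only [toZ, Matrix.cons_val_zero, Matrix.cons_val_one, Matrix.head_cons,
    Matrix.cons_val_two, Matrix.tail_cons, ZMod.val_one, ZMod.val_zero,
    Nat.cast_one, Nat.cast_zero] at hv0 hv1 hv2 hv01 hv02 hv12 hv3
  norm_num at hv0 hv1 hv2 hv01 hv02 hv12 hv3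
  have d0 := dvd_of_pow_one hv0
  have d1 := dvd_of_pow_one hv1
  have d2 := dvd_of_pow_one hv2
  have d01 := dvd_of_pow_one hv01
  have d02 := dvd_of_pow_one hv02
  have d12 := dvd_of_pow_one hv12
  have d3 := dvd_of_pow_neg_one hv3
  omega



end

end CliffordHierarchy
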